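/- For all k ≥ 0, the maximum value of s(n) over n in the interval [4^k, 4^(k+1) − 1] is 2^(k+2) − 1, attained only at n = (2/3)(2^(2k+2) − 1). -/
import Mathlib

def rs : ℕ → ℤ
  | 0 => 1
  | (n+1) =>
    if (n+1) % 2 = 0 then rs ((n+1)/2)
    else (-1)^((n+1)/2) * rs ((n+1)/2)
decreasing_by all_goals exact Nat.div_lt_self (Nat.succ_pos n) (by norm_num)

def s (n : ℕ) : ℤ := ∑ i ∈ Finset.range (n+1), rs i

def t (n : ℕ) : ℤ := ∑ i ∈ Finset.range (n+1), (-1)^i * rs i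

lemma rs_zero : rs 0 = 1 := by rw [rs]

lemma rs_eq (n : ℕ) : rs (n+1) =
    if (n+1) % 2 = 0 then rs ((n+1)/2) else (-1)^((n+1)/2) * rs ((n+1)/2) := by rw [rs]

lemma neg_one_pow_cases (p : ℕ) : ((-1:ℤ))^p = 1 ∨ ((-1:ℤ))^p = -1 := by
  rcases Nat.even_or_odd p with h | h
  · left; exact h.neg_one_pow
  · right; exact h.neg_one_pow

lemma rs_two_mul (n : ℕ) : rs (2*n) = rs n := by
  cases n with
  | zero => rfl
  | succ m =>
    have h : 2*(m+1) = (2*m+1)+1 := by ring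
    rw [h, rs_eq]
    have h2 : (2*m+1+1) % 2 = 0 := by omega
    have h3 : (2*m+1+1)/2 = m+1 := by omega
    rw [if_pos h2, h3]

lemma rs_odd (n : ℕ) : rs (2*n+1) = (-1)^n * rs n := by
  rw [rs_eq]
  have h3 : (2*n+1)/2 = n := by omega
  rw [if_neg (by omega), h3]

lemma rs_sign (n : ℕ) : rs n = 1 ∨ rs n = -1 := by
  induction n using Nat.strong_induction_on with
  | _ n ih =>
    match n with
    | 0 => left; exact rs_zero
    | (m+1) =>
      rw [rs_eq]
      have h := ih ((m+1)/2) (Nat.div_lt_self (Nat.succ_pos m) one_lt_two)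
      have hp := neg_one_pow_cases ((m+1)/2)
      split
      · exact h
      · rcases h with h | h <;> rcases hp with hp | hp <;> rw [h, hp] <;> norm_num

lemma s_zero : s 0 = 1 := by simp [s, rs_zero]

lemma t_zero : t 0 = 1 := by simp [t, rs_zero]

lemma s_succ (n : ℕ) : s (n+1) = s n + rs (n+1) := Finset.sum_range_succ _ _

lemma t_succ (n : ℕ) : t (n+1) = t n + (-1)^(n+1) * rs (n+1) := Finset.sum_range_succ _ _

lemma rs_one : rs 1 = 1 := by
  rw [show (1:ℕ) = 2*0+1 from rfl, rs_odd, rs_zero]; norm_num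

lemma s_succ2 (m : ℕ) : s (m+2) = s m + rs (m+1) + rs (m+2) := by
  rw [show m+2 = (m+1)+1 from rfl, s_succ, s_succ]

lemma t_succ2 (m : ℕ) : t (m+2) = t m + (-1)^(m+1) * rs (m+1) + (-1)^(m+2) * rs (m+2) := by
  rw [show m+2 = (m+1)+1 from rfl, t_succ, t_succ]

lemma st_odd (n : ℕ) : s (2*n+1) = s n + t n ∧ t (2*n+1) = s n - t n := by
  induction n with
  | zero =>
    constructor
    · rw [show 2*0+1 = 0+1 from rfl, s_succ, s_zero, t_zero, rs_one]
    · rw [show 2*0+1 = 0+1 from rfl, t_succ, s_zero, t_zero, rs_one]; norm_num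
  | succ n ih =>
    obtain ⟨ih1, ih2⟩ := ih
    have e1 : 2*(n+1)+1 = (2*n+1)+2 := by ring
    have hre : rs ((2*n+1)+1) = rs (n+1) := by
      rw [show (2*n+1)+1 = 2*(n+1) from by ring, rs_two_mul]
    have hro : rs ((2*n+1)+2) = (-1)^(n+1) * rs (n+1) := by
      rw [show (2*n+1)+2 = 2*(n+1)+1 from by ring, rs_odd]
    have hp1 : ((-1:ℤ))^((2*n+1)+1) = 1 := by
      rw [show (2*n+1)+1 = 2*(n+1) from by ring, pow_mul]; norm_num
    have hp2 : ((-1:ℤ))^((2*n+1)+2) = -1 := by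
      rw [show (2*n+1)+2 = 2*(n+1)+1 from by ring, pow_succ, pow_mul]; norm_num
    constructor
    · rw [e1, s_succ2, hre, hro, ih1, s_succ, t_succ]; ring
    · rw [e1, t_succ2, hre, hro, hp1, hp2, ih2, s_succ, t_succ]; ring

lemma s_odd (n : ℕ) : s (2*n+1) = s n + t n := (st_odd n).1
lemma t_odd (n : ℕ) : t (2*n+1) = s n - t n := (st_odd n).2

lemma s_even (n : ℕ) : s (2*n) = s n + t n - (-1)^n * rs n := by
  have h := s_succ (2*n)
  rw [s_odd, rs_odd] at h
  linarith

lemma t_even (n : ℕ) : t (2*n) = s n - t n + (-1)^n * rs n := by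
  have h := t_succ (2*n)
  have hp : ((-1:ℤ))^(2*n+1) = -1 := by
    rw [pow_succ, pow_mul]; norm_num
  rw [t_odd, rs_odd, hp] at h
  linarith

lemma s4_0 (p : ℕ) : s (4*p) = 2 * s p - rs p := by
  have h : 4*p = 2*(2*p) := by ring
  rw [h, s_even, s_even, t_even, rs_two_mul]
  have hp : ((-1:ℤ))^(2*p) = 1 := by rw [pow_mul]; norm_num
  rw [hp]; ring

lemma s4_1 (p : ℕ) : s (4*p+1) = 2 * s p := by
  have h : 4*p+1 = 2*(2*p)+1 := by ring
  rw [h, s_odd, s_even, t_even]; ring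

lemma s4_2 (p : ℕ) : s (4*p+2) = 2 * s p + (-1)^p * rs p := by
  have h : 4*p+2 = 2*(2*p+1) := by ring
  rw [h, s_even, s_odd, t_odd, rs_odd]
  have hp : ((-1:ℤ))^(2*p+1) = -1 := by rw [pow_succ, pow_mul]; norm_num
  rw [hp]; ring

lemma s4_3 (p : ℕ) : s (4*p+3) = 2 * s p := by
  have h : 4*p+3 = 2*(2*p+1)+1 := by ring
  rw [h, s_odd, s_odd, t_odd]; ring

/-- The maximizer sequence -/
def M : ℕ → ℕ
  | 0 => 2
  | (k+1) => 4 * M k + 2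

lemma M_succ (k : ℕ) : M (k+1) = 4 * M k + 2 := rfl

lemma M_val (k : ℕ) : 3 * M k + 2 = 2 * 2^(2*k+2) := by
  induction k with
  | zero => rfl
  | succ k ih =>
    have h : (2:ℕ)^(2*(k+1)+2) = 4 * 2^(2*k+2) := by ring
    rw [M_succ, h]; omega

lemma M_even (k : ℕ) : M k % 2 = 0 := by
  cases k with
  | zero => rfl
  | succ k => rw [M_succ]; omega

lemma rs_M (k : ℕ) : rs (M k) = 1 := by
  induction k with
  | zero =>
    show rs 2 = 1
    rw [show (2:ℕ) = 2*1 from rfl, rs_two_mul, rs_one]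
  | succ k ih =>
    rw [M_succ, show 4 * M k + 2 = 2*(2 * M k + 1) from by ring, rs_two_mul, rs_odd]
    have he : Even (M k) := Nat.even_iff.mpr (M_even k)
    rw [he.neg_one_pow, ih]; norm_num

lemma eps_sign (p : ℕ) : (-1:ℤ)^p * rs p = 1 ∨ (-1:ℤ)^p * rs p = -1 := by
  rcases rs_sign p with h | h <;> rcases neg_one_pow_cases p with hp | hp <;>
    rw [h, hp] <;> norm_num

theorem stmt12 : ∀ k : ℕ,
    (∀ n : ℕ, 4^k ≤ n → n ≤ 4^(k+1) - 1 → s n ≤ 2^(k+2) - 1) ∧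
    (∀ n : ℕ, 4^k ≤ n → n ≤ 4^(k+1) - 1 →
      (s n = 2^(k+2) - 1 ↔ n = 2 * (2^(2*k+2) - 1) / 3)) := by
  have key : ∀ k : ℕ,
      (∀ n : ℕ, 4^k ≤ n → n ≤ 4^(k+1) - 1 → s n ≤ 2^(k+2) - 1 ∧
        (s n = 2^(k+2) - 1 ↔ n = M k)) := by
    intro k
    induction k with
    | zero =>
      intro n h1 h2
      norm_num at h1 h2
      have hs1 : s 1 = 2 := by
        rw [show (1:ℕ) = 0+1 from rfl, s_succ, s_zero, rs_one]; norm_num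
      have hrs2 : rs 2 = 1 := by rw [show (2:ℕ) = 2*1 from rfl, rs_two_mul, rs_one]
      have hrs3 : rs 3 = -1 := by
        rw [show (3:ℕ) = 2*1+1 from rfl, rs_odd, rs_one]; norm_num
      have hs2 : s 2 = 3 := by
        rw [show (2:ℕ) = 1+1 from rfl, s_succ, hs1, hrs2]; norm_num
      have hs3 : s 3 = 2 := by
        rw [show (3:ℕ) = 2+1 from rfl, s_succ, hs2, hrs3]; norm_num
      interval_cases n
      · rw [hs1]
        refine ⟨by norm_num, ?_, ?_⟩
        · intro h; norm_num at h
        · intro h; simp [M] at h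
      · rw [hs2]
        refine ⟨by norm_num, ?_, ?_⟩
        · intro _; rfl
        · intro _; norm_num
      · rw [hs3]
        refine ⟨by norm_num, ?_, ?_⟩
        · intro h; norm_num at h
        · intro h; simp [M] at h
    | succ k ih =>
      intro n h1 h2
      have e4a : (4:ℕ)^(k+1) = 4 * 4^k := by ring
      have e4b : (4:ℕ)^(k+1+1) = 16 * 4^k := by ring
      have hpos : (1:ℕ) ≤ 4^k := Nat.one_le_pow _ _ (by norm_num)
      set p := n / 4 with hp
      have hn4 : n = 4 * p + n % 4 ∧ n % 4 < 4 := by omega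
      have hpb1 : 4^k ≤ p := by omega
      have hpb2 : p ≤ 4^(k+1) - 1 := by omega
      obtain ⟨hb, hiff⟩ := ih p hpb1 hpb2
      have hZ : ((2:ℤ))^(k+1+2) = 2 * 2^(k+2) := by ring
      have hMs : M (k+1) = 4 * M k + 2 := rfl
      have heven : Even (M k) := Nat.even_iff.mpr (M_even k)
      have hc : n % 4 = 0 ∨ n % 4 = 1 ∨ n % 4 = 2 ∨ n % 4 = 3 := by omega
      rcases hc with hc | hc | hc | hc
      · -- n = 4p
        have hne : n = 4 * p := by omega
        rw [hne, s4_0]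
        rcases rs_sign p with h | h
        · refine ⟨by rw [h]; linarith, ?_, ?_⟩
          · intro he
            exfalso
            rw [h] at he
            linarith
          · intro he
            rw [he, hMs] at hne
            omega
        · refine ⟨by rw [h]; linarith, ?_, ?_⟩
          · intro he
            exfalso
            rw [h] at he
            have hsp : s p = 2^(k+2) - 1 := by linarith
            have hpM := hiff.mp hsp
            rw [hpM, rs_M] at h
            norm_num at h
          · intro he
            rw [he, hMs] at hne
            omega
      · -- n = 4p+1
        have hne : n = 4 * p + 1 := by omega
        rw [hne, s4_1]
        refine ⟨by linarith, ?_, ?_⟩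
        · intro he
          exfalso
          obtain ⟨a, ha⟩ : ∃ a : ℤ, (2:ℤ)^(k+2) = a := ⟨_, rfl⟩
          obtain ⟨b, hb'⟩ : ∃ b : ℤ, s p = b := ⟨_, rfl⟩
          rw [hZ, ha, hb'] at he
          omega
        · intro he
          rw [he, hMs] at hne
          omega
      · -- n = 4p+2
        have hne : n = 4 * p + 2 := by omega
        rw [hne, s4_2]
        rcases eps_sign p with h | h
        · refine ⟨by rw [h]; linarith, ?_, ?_⟩
          · intro he
            have hsp : s p = 2^(k+2) - 1 := by rw [h] at he; linarith
            have hpM := hiff.mp hsp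
            rw [hMs, ← hpM]
          · intro he
            have hpM : p = M k := by rw [he, hMs] at hne; omega
            have hsp : s p = 2^(k+2) - 1 := hiff.mpr hpM
            rw [h, hsp]; linarith
        · refine ⟨by rw [h]; linarith, ?_, ?_⟩
          · intro he
            exfalso
            rw [h] at he
            have : s p = 2^(k+2) := by linarith
            linarith
          · intro he
            exfalso
            have hpM : p = M k := by rw [he, hMs] at hne; omega
            rw [hpM, heven.neg_one_pow, rs_M] at h
            norm_num at h
      · -- n = 4p+3
        have hne : n = 4 * p + 3 := by omega
        rw [hne, s4_3]
        refine ⟨by linarith, ?_, ?_⟩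
        · intro he
          exfalso
          obtain ⟨a, ha⟩ : ∃ a : ℤ, (2:ℤ)^(k+2) = a := ⟨_, rfl⟩
          obtain ⟨b, hb'⟩ : ∃ b : ℤ, s p = b := ⟨_, rfl⟩
          rw [hZ, ha, hb'] at he
          omega
        · intro he
          rw [he, hMs] at hne
          omega
  intro k
  have h := key k
  have hm := M_val k
  have hMn : 2 * (2^(2*k+2) - 1) / 3 = M k := by
    obtain ⟨a, ha⟩ : ∃ a : ℕ, (2:ℕ)^(2*k+2) = a := ⟨_, rfl⟩
    rw [ha] at hm ⊢
    omega
  refine ⟨fun n h1 h2 => (h n h1 h2).1, fun n h1 h2 => ?_⟩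
  rw [hMn]
  exact (h n h1 h2).2
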